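/- (Sufficiency part of the inverse spectral theorem.) Let σ be a nonnegative Borel measure on ℝ with σ(ℝ) = 1, all power moments finite, and ∫|g|² dσ > 0 for every nonzero complex polynomial g, and let T be a linear operator on the space of complex polynomials satisfying conditions (ii) and (iii). Then there exists a Jacobi-type pencil Θ (i.e., sequences a_n > 0, b_n ∈ ℝ, α_n, β_n ∈ ℝ, γ_n > 0, and constants α > 0, β ∈ ℝ) whose associated polynomials (p_n) satisfy ∫ (p_n(T)(1))(x) · conj((p_m(T)(1))(x)) dσ(x) = δ_{n,m} for all n, m ≥ 0; that is, the functional S(u,v) := ∫ u(T)(1) conj(v(T)(1)) dσ is the spectral function of Θ. -/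

import Mathlib

open Polynomial MeasureTheory

noncomputable section

/-- The standard basis of the space of finitely supported complex sequences. -/
def e (n : ℕ) : ℕ →₀ ℂ := Finsupp.single n 1

/-- The standard basis extended by zero to negative indices. -/
def eZ (n : ℤ) : ℕ →₀ ℂ := if n < 0 then 0 else e n.toNat

/-- Extension of a real sequence by zero to negative indices. -/
def extZ (a : ℕ → ℝ) (n : ℤ) : ℝ := if n < 0 then 0 else a n.toNat

/-- Extension of a sequence of polynomials by zero to negative indices. -/
def extP (p : ℕ → Polynomial ℂ) (n : ℤ) : Polynomial ℂ := if n < 0 then 0 else p n.toNat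

/-- The data of a Jacobi-type pencil `Θ = (J₃, J₅, α, β)`:
`a`, `b` are the entries of the Jacobi matrix `J₃` (`a n > 0`);
`al`, `be`, `ga` are the entries of the five-diagonal matrix `J₅` (`ga n > 0`);
`α > 0`, `β ∈ ℝ`. -/
structure JacobiPencil where
  a : ℕ → ℝ
  b : ℕ → ℝ
  al : ℕ → ℝ
  be : ℕ → ℝ
  ga : ℕ → ℝ
  α : ℝ
  β : ℝ
  ha : ∀ n, 0 < a n
  hga : ∀ n, 0 < ga n
  hα : 0 < α

/-- The `n`-th column `J₃ e_n = a_{n-1} e_{n-1} + b_n e_n + a_n e_{n+1}` of the Jacobi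
matrix (terms with negative indices omitted). -/
def J3col (Θ : JacobiPencil) (n : ℕ) : ℕ →₀ ℂ :=
  (extZ Θ.a ((n : ℤ) - 1) : ℂ) • eZ ((n : ℤ) - 1) + (Θ.b n : ℂ) • e n + (Θ.a n : ℂ) • e (n + 1)

/-- The `n`-th column
`J₅ e_n = γ_{n-2} e_{n-2} + β_{n-1} e_{n-1} + α_n e_n + β_n e_{n+1} + γ_n e_{n+2}`
of the five-diagonal matrix (terms with negative indices omitted). -/
def J5col (Θ : JacobiPencil) (n : ℕ) : ℕ →₀ ℂ :=
  (extZ Θ.ga ((n : ℤ) - 2) : ℂ) • eZ ((n : ℤ) - 2)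
    + (extZ Θ.be ((n : ℤ) - 1) : ℂ) • eZ ((n : ℤ) - 1)
    + (Θ.al n : ℂ) • e n + (Θ.be n : ℂ) • e (n + 1) + (Θ.ga n : ℂ) • e (n + 2)

/-- `A` is the associated operator of the Jacobi-type pencil `Θ`:
`A e₀ = (1/α)(e₁ - β e₀)` and `A (J₃ eₙ) = J₅ eₙ` for all `n`. -/
def IsAssociatedOperator (Θ : JacobiPencil) (A : Module.End ℂ (ℕ →₀ ℂ)) : Prop :=
  A (e 0) = ((Θ.α : ℂ))⁻¹ • (e 1 - (Θ.β : ℂ) • e 0) ∧ ∀ n : ℕ, A (J3col Θ n) = J5col Θ n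

/-- `p` is the family of polynomials associated to the Jacobi-type pencil `Θ`:
`p₀ = 1`, `p₁(λ) = αλ + β`, and for all `n ≥ 0`
`γ_n p_{n+2} = -γ_{n-2} p_{n-2} - (β_{n-1} - λ a_{n-1}) p_{n-1}
  - (α_n - λ b_n) p_n - (β_n - λ a_n) p_{n+1}`,
with `p_{-2} = p_{-1} = 0` and coefficients with negative indices set to zero. -/
def IsAssociatedPolynomials (Θ : JacobiPencil) (p : ℕ → Polynomial ℂ) : Prop :=
  p 0 = 1 ∧ p 1 = C (Θ.α : ℂ) * X + C (Θ.β : ℂ) ∧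
  ∀ n : ℕ, C (Θ.ga n : ℂ) * p (n + 2) =
      - C (extZ Θ.ga ((n : ℤ) - 2) : ℂ) * extP p ((n : ℤ) - 2)
      - (C (extZ Θ.be ((n : ℤ) - 1) : ℂ) - X * C (extZ Θ.a ((n : ℤ) - 1) : ℂ))
          * extP p ((n : ℤ) - 1)
      - (C (Θ.al n : ℂ) - X * C (Θ.b n : ℂ)) * p n
      - (C (Θ.be n : ℂ) - X * C (Θ.a n : ℂ)) * p (n + 1)

/-- The `l₂` inner product `Σ_{k≥0} f(k) conj(g(k))` of two finitely supported sequences. -/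
def ipl2 (f g : ℕ →₀ ℂ) : ℂ := ∑ k ∈ f.support ∪ g.support, f k * (starRingEnd ℂ) (g k)

/-- The inner product `⟨u, v⟩_σ = ∫ u(x) conj(v(x)) dσ(x)` of two complex polynomials. -/
def ipm (σ : Measure ℝ) (u v : Polynomial ℂ) : ℂ :=
  ∫ x, u.eval (x : ℂ) * (starRingEnd ℂ) (v.eval (x : ℂ)) ∂σ

/-- All power moments of `σ` are finite. -/
def HasFiniteMoments (σ : Measure ℝ) : Prop := ∀ k : ℕ, Integrable (fun x => x ^ k) σ

/-- `∫ |g|² dσ > 0` for every nonzero complex polynomial `g`. -/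
def PosOnPolys (σ : Measure ℝ) : Prop :=
  ∀ g : Polynomial ℂ, g ≠ 0 → 0 < ∫ x, ‖g.eval (x : ℂ)‖ ^ 2 ∂σ

/-- Condition (ii): for each `k`, `T x^k = ξ_{k,k+1} x^{k+1} + Σ_{j=0}^k ξ_{k,j} x^j`
with `ξ_{k,k+1} > 0` and all `ξ_{k,j}` real. -/
def CondII (T : Module.End ℂ (Polynomial ℂ)) : Prop :=
  ∀ k : ℕ, ∃ ξ : ℕ → ℝ, 0 < ξ (k + 1) ∧
    T (X ^ k) = ∑ j ∈ Finset.range (k + 2), C (ξ j : ℂ) * X ^ j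

/-- Condition (iii): `⟨T(x·u), v⟩_σ = ⟨u, T(x·v)⟩_σ` for all polynomials `u`, `v`,
i.e., the operator `T Λ₀` is symmetric. -/
def CondIII (σ : Measure ℝ) (T : Module.End ℂ (Polynomial ℂ)) : Prop :=
  ∀ u v : Polynomial ℂ, ipm σ (T (X * u)) v = ipm σ u (T (X * v))

/-! ### Auxiliary material for the proof -/

section AuxIpm

variable {σ : Measure ℝ}

lemma conj_polyEval (p : Polynomial ℂ) (z : ℂ) :
    (starRingEnd ℂ) (p.eval z) = (p.map (starRingEnd ℂ)).eval ((starRingEnd ℂ) z) := by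
  rw [eval_map, ← Polynomial.eval₂_at_apply]

lemma mulConjSelf (z : ℂ) : z * (starRingEnd ℂ) z = ((‖z‖ ^ 2 : ℝ) : ℂ) := by
  rw [Complex.mul_conj]; norm_cast
  exact (Complex.normSq_eq_norm_sq z)

lemma integrable_polyEval (hmom : HasFiniteMoments σ) (q : Polynomial ℂ) :
    Integrable (fun x : ℝ => q.eval (x : ℂ)) σ := by
  induction q using Polynomial.induction_on' with
  | add p q hp hq => simp only [eval_add]; exact hp.add hq
  | monomial k c =>
      have h : Integrable (fun x : ℝ => c * ((x ^ k : ℝ) : ℂ)) σ := ((hmom k).ofReal).const_mul c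
      simpa [eval_monomial, Complex.ofReal_pow] using h

lemma ipm_integrand (u v : Polynomial ℂ) (x : ℝ) :
    u.eval (x : ℂ) * (starRingEnd ℂ) (v.eval (x : ℂ))
      = (u * v.map (starRingEnd ℂ)).eval (x : ℂ) := by
  rw [eval_mul, conj_polyEval, Complex.conj_ofReal]

lemma integrable_ipm (hmom : HasFiniteMoments σ) (u v : Polynomial ℂ) :
    Integrable (fun x : ℝ => u.eval (x : ℂ) * (starRingEnd ℂ) (v.eval (x : ℂ))) σ := by
  simp only [ipm_integrand]; exact integrable_polyEval hmom _

lemma ipm_add_left (hmom : HasFiniteMoments σ) (u u' v : Polynomial ℂ) :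
    ipm σ (u + u') v = ipm σ u v + ipm σ u' v := by
  unfold ipm
  simp only [eval_add, add_mul]
  exact integral_add (integrable_ipm hmom u v) (integrable_ipm hmom u' v)

lemma ipm_add_right (hmom : HasFiniteMoments σ) (u v v' : Polynomial ℂ) :
    ipm σ u (v + v') = ipm σ u v + ipm σ u v' := by
  unfold ipm
  simp only [eval_add, map_add, mul_add]
  exact integral_add (integrable_ipm hmom u v) (integrable_ipm hmom u v')

lemma ipm_smul_left (c : ℂ) (u v : Polynomial ℂ) :
    ipm σ (c • u) v = c * ipm σ u v := by
  unfold ipm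
  rw [← smul_eq_mul, ← integral_smul]
  simp only [eval_smul, smul_eq_mul, mul_assoc]

lemma ipm_smul_right (c : ℂ) (u v : Polynomial ℂ) :
    ipm σ u (c • v) = (starRingEnd ℂ) c * ipm σ u v := by
  unfold ipm
  rw [← smul_eq_mul, ← integral_smul]
  simp only [eval_smul, smul_eq_mul, map_mul]
  congr 1; ext x; ring

lemma ipm_conj (u v : Polynomial ℂ) : (starRingEnd ℂ) (ipm σ u v) = ipm σ v u := by
  unfold ipm
  rw [← integral_conj]
  simp only [map_mul, Complex.conj_conj]
  congr 1; ext x; ring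

lemma ipm_zero_left (v : Polynomial ℂ) : ipm σ 0 v = 0 := by
  unfold ipm; simp

lemma ipm_zero_right (u : Polynomial ℂ) : ipm σ u 0 = 0 := by
  unfold ipm; simp

lemma ipm_neg_left (u v : Polynomial ℂ) : ipm σ (-u) v = - ipm σ u v := by
  unfold ipm; rw [← integral_neg]; simp

lemma ipm_sub_left (hmom : HasFiniteMoments σ) (u u' v : Polynomial ℂ) :
    ipm σ (u - u') v = ipm σ u v - ipm σ u' v := by
  rw [sub_eq_add_neg, ipm_add_left hmom, ipm_neg_left, sub_eq_add_neg]

lemma ipm_sum_left (hmom : HasFiniteMoments σ) {ι : Type*} (s : Finset ι)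
    (f : ι → Polynomial ℂ) (v : Polynomial ℂ) :
    ipm σ (∑ i ∈ s, f i) v = ∑ i ∈ s, ipm σ (f i) v := by
  classical
  induction s using Finset.induction_on with
  | empty => simp [ipm_zero_left]
  | insert _ _ h ih => rw [Finset.sum_insert h, Finset.sum_insert h, ipm_add_left hmom, ih]

lemma ipm_sum_right (hmom : HasFiniteMoments σ) {ι : Type*} (s : Finset ι)
    (f : ι → Polynomial ℂ) (u : Polynomial ℂ) :
    ipm σ u (∑ i ∈ s, f i) = ∑ i ∈ s, ipm σ u (f i) := by
  classical
  induction s using Finset.induction_on with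
  | empty => simp [ipm_zero_right]
  | insert _ _ h ih => rw [Finset.sum_insert h, Finset.sum_insert h, ipm_add_right hmom, ih]

lemma ipm_self (g : Polynomial ℂ) :
    ipm σ g g = ((∫ x, ‖g.eval (x : ℂ)‖ ^ 2 ∂σ : ℝ) : ℂ) := by
  have h : ∫ x, ((‖g.eval (x : ℂ)‖ ^ 2 : ℝ) : ℂ) ∂σ
      = ((∫ x, ‖g.eval (x : ℂ)‖ ^ 2 ∂σ : ℝ) : ℂ) := integral_ofReal
  rw [← h]
  unfold ipm
  congr 1; ext x; exact mulConjSelf _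

lemma ipm_self_pos (hpos : PosOnPolys σ) {g : Polynomial ℂ} (hg : g ≠ 0) :
    0 < (ipm σ g g).re ∧ (ipm σ g g).im = 0 := by
  rw [ipm_self]
  exact ⟨by simpa using hpos g hg, by simp⟩

lemma ipm_X_comm (u v : Polynomial ℂ) : ipm σ (X * u) v = ipm σ u (X * v) := by
  unfold ipm
  congr 1; ext x
  simp only [eval_mul, eval_X, map_mul, Complex.conj_ofReal]
  ring

end AuxIpm

section AuxReal

variable {σ : Measure ℝ}

/-- A polynomial has real coefficients iff it is fixed by coefficientwise conjugation. -/
def RP (p : Polynomial ℂ) : Prop := p.map (starRingEnd ℂ) = p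

lemma RP.coeff {p : Polynomial ℂ} (hp : RP p) (k : ℕ) :
    (starRingEnd ℂ) (p.coeff k) = p.coeff k := by
  conv_rhs => rw [← hp]
  rw [coeff_map]

lemma RP.conj_eval {p : Polynomial ℂ} (hp : RP p) (x : ℝ) :
    (starRingEnd ℂ) (p.eval (x : ℂ)) = p.eval (x : ℂ) := by
  rw [conj_polyEval, Complex.conj_ofReal, hp]

lemma RP.add {p q : Polynomial ℂ} (hp : RP p) (hq : RP q) : RP (p + q) := by
  unfold RP at *; rw [Polynomial.map_add, hp, hq]

lemma RP.sub {p q : Polynomial ℂ} (hp : RP p) (hq : RP q) : RP (p - q) := by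
  unfold RP at *; rw [Polynomial.map_sub, hp, hq]

lemma RP.mul {p q : Polynomial ℂ} (hp : RP p) (hq : RP q) : RP (p * q) := by
  unfold RP at *; rw [Polynomial.map_mul, hp, hq]

lemma RP_zero : RP (0 : Polynomial ℂ) := by unfold RP; simp

lemma RP_one : RP (1 : Polynomial ℂ) := by unfold RP; simp

lemma RP_X : RP (X : Polynomial ℂ) := by unfold RP; simp

lemma RP_X_pow (k : ℕ) : RP ((X : Polynomial ℂ) ^ k) := by unfold RP; simp

lemma RP_C_real (r : ℝ) : RP (C (r : ℂ)) := by
  unfold RP; rw [map_C, Complex.conj_ofReal]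

lemma RP.smul {c : ℂ} (hc : (starRingEnd ℂ) c = c) {p : Polynomial ℂ} (hp : RP p) :
    RP (c • p) := by
  rw [Polynomial.smul_eq_C_mul]
  refine RP.mul ?_ hp
  unfold RP; rw [map_C, hc]

lemma RP_sum {ι : Type*} (s : Finset ι) (f : ι → Polynomial ℂ)
    (hf : ∀ i ∈ s, RP (f i)) : RP (∑ i ∈ s, f i) := by
  classical
  induction s using Finset.induction_on with
  | empty => exact RP_zero
  | insert _ _ h ih =>
      rw [Finset.sum_insert h]
      exact RP.add (hf _ (Finset.mem_insert_self _ _))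
        (ih fun i hi => hf i (Finset.mem_insert_of_mem hi))

/-- The inner product of two real polynomials is fixed by conjugation. -/
lemma ipm_conj_fixed {u v : Polynomial ℂ} (hu : RP u) (hv : RP v) :
    (starRingEnd ℂ) (ipm σ u v) = ipm σ u v := by
  unfold ipm
  rw [← integral_conj]
  congr 1; ext x
  simp only [map_mul, Complex.conj_conj, hu.conj_eval, hv.conj_eval]

lemma ipm_real_val {u v : Polynomial ℂ} (hu : RP u) (hv : RP v) :
    ipm σ u v = (((ipm σ u v).re : ℝ) : ℂ) := by
  have h := ipm_conj_fixed (σ := σ) hu hv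
  rw [Complex.conj_eq_iff_re] at h
  exact h.symm

end AuxReal

section AuxT

variable {σ : Measure ℝ} {T : Module.End ℂ (Polynomial ℂ)}

/-- A choice of the coefficients `ξ_{k,j}` from condition (ii). -/
def xi (hII : CondII T) (k : ℕ) : ℕ → ℝ := (hII k).choose

lemma xi_pos (hII : CondII T) (k : ℕ) : 0 < xi hII k (k + 1) := (hII k).choose_spec.1

lemma T_X_pow (hII : CondII T) (k : ℕ) :
    T (X ^ k) = ∑ j ∈ Finset.range (k + 2), C ((xi hII k j : ℝ) : ℂ) * X ^ j :=
  (hII k).choose_spec.2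

lemma T_X_pow_real (hII : CondII T) (k : ℕ) : RP (T (X ^ k)) := by
  rw [T_X_pow hII]
  exact RP_sum _ _ fun j _ => (RP_C_real _).mul (RP_X_pow j)

lemma T_X_pow_natDegree_le (hII : CondII T) (k : ℕ) : (T (X ^ k)).natDegree ≤ k + 1 := by
  rw [T_X_pow hII]
  refine Polynomial.natDegree_sum_le_of_forall_le _ _ fun j hj => ?_
  refine le_trans (Polynomial.natDegree_C_mul_le _ _) ?_
  rw [natDegree_X_pow]
  have := Finset.mem_range.mp hj
  omega

/-- Any polynomial is the canonical combination of monomials. -/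
lemma poly_as_sum {p : Polynomial ℂ} {n : ℕ} (h : p.natDegree ≤ n) :
    p = ∑ j ∈ Finset.range (n + 1), p.coeff j • (X ^ j : Polynomial ℂ) := by
  have := Polynomial.as_sum_range' p (n + 1) (Nat.lt_succ_of_le h)
  simpa only [← Polynomial.C_mul_X_pow_eq_monomial, ← Polynomial.smul_eq_C_mul] using this

lemma T_apply_sum {p : Polynomial ℂ} {n : ℕ} (h : p.natDegree ≤ n) :
    T p = ∑ j ∈ Finset.range (n + 1), p.coeff j • T (X ^ j) := by
  conv_lhs => rw [poly_as_sum h]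
  rw [map_sum]
  simp only [LinearMap.map_smul]

lemma T_natDegree_le (hII : CondII T) (p : Polynomial ℂ) :
    (T p).natDegree ≤ p.natDegree + 1 := by
  rw [T_apply_sum le_rfl]
  refine Polynomial.natDegree_sum_le_of_forall_le _ _ fun j hj => ?_
  refine le_trans (Polynomial.natDegree_smul_le _ _) ?_
  refine le_trans (T_X_pow_natDegree_le hII j) ?_
  have := Finset.mem_range.mp hj
  omega

lemma T_real (hII : CondII T) {p : Polynomial ℂ} (hp : RP p) : RP (T p) := by
  rw [T_apply_sum le_rfl]
  exact RP_sum _ _ fun j _ => RP.smul (hp.coeff j) (T_X_pow_real hII j)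

lemma T_coeff_top (hII : CondII T) {p : Polynomial ℂ} {n : ℕ} (h : p.natDegree ≤ n) :
    (T p).coeff (n + 1) = ((xi hII n (n + 1) : ℝ) : ℂ) * p.coeff n := by
  rw [T_apply_sum h, Polynomial.finset_sum_coeff]
  rw [Finset.sum_range_succ]
  have hz : ∀ j ∈ Finset.range n, (p.coeff j • T (X ^ j)).coeff (n + 1) = 0 := by
    intro j hj
    have hj' := Finset.mem_range.mp hj
    rw [Polynomial.coeff_smul]
    rw [Polynomial.coeff_eq_zero_of_natDegree_lt
      (lt_of_le_of_lt (T_X_pow_natDegree_le hII j) (by omega))]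
    simp
  rw [Finset.sum_eq_zero hz, zero_add, Polynomial.coeff_smul, T_X_pow hII,
    Polynomial.finset_sum_coeff]
  have : ∀ j ∈ Finset.range (n + 2),
      (C ((xi hII n j : ℝ) : ℂ) * X ^ j).coeff (n + 1)
        = if j = n + 1 then ((xi hII n (n + 1) : ℝ) : ℂ) else 0 := by
    intro j hj
    rw [Polynomial.coeff_C_mul, Polynomial.coeff_X_pow]
    by_cases hjn : j = n + 1 <;> simp [hjn, Ne.symm]
  rw [Finset.sum_congr rfl this, Finset.sum_ite_eq' (Finset.range (n + 2))]
  simp [Finset.mem_range, smul_eq_mul, mul_comm]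

end AuxT

section AuxGS

variable {σ : Measure ℝ}

/-- Gram–Schmidt orthonormalization of the monomials with respect to `ipm σ`. -/
def gs (σ : Measure ℝ) : ℕ → Polynomial ℂ
  | n =>
    let q : Polynomial ℂ := X ^ n - ∑ k : Fin n, ipm σ (X ^ n) (gs σ k) • gs σ k
    ((Real.sqrt (ipm σ q q).re : ℝ) : ℂ)⁻¹ • q
  termination_by n => n
  decreasing_by exact k.isLt

/-- The unnormalized Gram–Schmidt vector. -/
def gq (σ : Measure ℝ) (n : ℕ) : Polynomial ℂ :=
  X ^ n - ∑ k ∈ Finset.range n, ipm σ (X ^ n) (gs σ k) • gs σ k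

lemma gs_eq (n : ℕ) :
    gs σ n = ((Real.sqrt (ipm σ (gq σ n) (gq σ n)).re : ℝ) : ℂ)⁻¹ • gq σ n := by
  rw [gs, gq, ← Finset.sum_range fun k => ipm σ (X ^ n) (gs σ k) • gs σ k]

end AuxGS

section AuxGS2

variable {σ : Measure ℝ}

lemma gs_master (hmom : HasFiniteMoments σ) (hpos : PosOnPolys σ) : ∀ n : ℕ,
    RP (gs σ n) ∧ (gs σ n).natDegree = n
    ∧ (0 < ((gs σ n).coeff n).re ∧ ((gs σ n).coeff n).im = 0)
    ∧ (∀ k, k < n → ipm σ (gs σ n) (gs σ k) = 0)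
    ∧ ipm σ (gs σ n) (gs σ n) = 1
    ∧ (X ^ n : Polynomial ℂ)
        = ∑ k ∈ Finset.range (n + 1), ipm σ (X ^ n : Polynomial ℂ) (gs σ k) • gs σ k := by
  intro n
  induction n using Nat.strong_induction_on with
  | _ n IH =>
  -- orthonormality among the previous vectors
  have horth : ∀ j k, j < n → k < n →
      ipm σ (gs σ j) (gs σ k) = (if j = k then 1 else 0) := by
    intro j k hj hk
    rcases lt_trichotomy j k with h | h | h
    · rw [if_neg h.ne, ← ipm_conj, (IH k hk).2.2.2.1 j h, map_zero]
    · subst h; rw [if_pos rfl]; exact (IH j hj).2.2.2.2.1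
    · rw [if_neg h.ne', (IH j hj).2.2.2.1 k h]
  have hqreal : RP (gq σ n) := by
    refine RP.sub (RP_X_pow n) (RP_sum _ _ fun k hk => ?_)
    exact RP.smul (ipm_conj_fixed (RP_X_pow n) (IH k (Finset.mem_range.mp hk)).1)
      (IH k (Finset.mem_range.mp hk)).1
  have hqcoeff : (gq σ n).coeff n = 1 := by
    rw [gq, Polynomial.coeff_sub, Polynomial.coeff_X_pow, if_pos rfl,
      Polynomial.finset_sum_coeff, Finset.sum_eq_zero, sub_zero]
    intro k hk
    rw [Polynomial.coeff_smul, Polynomial.coeff_eq_zero_of_natDegree_lt, smul_zero]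
    rw [(IH k (Finset.mem_range.mp hk)).2.1]
    exact Finset.mem_range.mp hk
  have hqdeg : (gq σ n).natDegree = n := by
    refine le_antisymm ?_ (Polynomial.le_natDegree_of_ne_zero (by rw [hqcoeff]; exact one_ne_zero))
    rw [gq]
    refine le_trans (Polynomial.natDegree_sub_le _ _) (max_le (by rw [natDegree_X_pow]) ?_)
    refine Polynomial.natDegree_sum_le_of_forall_le _ _ fun k hk => ?_
    refine le_trans (Polynomial.natDegree_smul_le _ _) ?_
    rw [(IH k (Finset.mem_range.mp hk)).2.1]
    exact (Finset.mem_range.mp hk).le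
  have hq0 : gq σ n ≠ 0 := by
    intro h; rw [h] at hqcoeff; simp at hqcoeff
  have hrpos : 0 < (ipm σ (gq σ n) (gq σ n)).re := (ipm_self_pos hpos hq0).1
  have hqq : ipm σ (gq σ n) (gq σ n) = (((ipm σ (gq σ n) (gq σ n)).re : ℝ) : ℂ) :=
    ipm_real_val hqreal hqreal
  set r : ℝ := (ipm σ (gq σ n) (gq σ n)).re with hr
  set c : ℝ := Real.sqrt r with hcdef
  have hcpos : 0 < c := Real.sqrt_pos.mpr hrpos
  have hcC : ((c : ℝ) : ℂ) ≠ 0 := by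
    simpa using hcpos.ne'
  have hgs : gs σ n = ((c : ℝ) : ℂ)⁻¹ • gq σ n := gs_eq n
  have hgq_eq : gq σ n = ((c : ℝ) : ℂ) • gs σ n := by
    rw [hgs, smul_smul, mul_inv_cancel₀ hcC, one_smul]
  have hqorth : ∀ k, k < n → ipm σ (gq σ n) (gs σ k) = 0 := by
    intro k hk
    rw [gq, ipm_sub_left hmom, ipm_sum_left hmom]
    simp only [ipm_smul_left]
    rw [Finset.sum_eq_single k]
    · rw [horth k k hk hk, if_pos rfl, mul_one, sub_self]
    · intro j hj hjk
      rw [horth j k (Finset.mem_range.mp hj) hk, if_neg hjk, mul_zero]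
    · intro h; exact absurd (Finset.mem_range.mpr hk) h
  have hreal : RP (gs σ n) := by
    rw [hgs]
    refine RP.smul ?_ hqreal
    rw [map_inv₀, Complex.conj_ofReal]
  have hcoeff : (gs σ n).coeff n = ((c : ℝ) : ℂ)⁻¹ := by
    rw [hgs, Polynomial.coeff_smul, hqcoeff, smul_eq_mul, mul_one]
  have hdeg : (gs σ n).natDegree = n := by
    refine le_antisymm (le_trans (by rw [hgs]; exact Polynomial.natDegree_smul_le _ _) hqdeg.le)
      (Polynomial.le_natDegree_of_ne_zero ?_)
    rw [hcoeff]
    exact inv_ne_zero hcC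
  have hcoeffpos : 0 < ((gs σ n).coeff n).re ∧ ((gs σ n).coeff n).im = 0 := by
    rw [hcoeff, ← Complex.ofReal_inv]
    constructor
    · simpa using inv_pos.mpr hcpos
    · simp
  have hortho : ∀ k, k < n → ipm σ (gs σ n) (gs σ k) = 0 := by
    intro k hk
    rw [hgs, ipm_smul_left, hqorth k hk, mul_zero]
  have hnorm : ipm σ (gs σ n) (gs σ n) = 1 := by
    rw [hgs, ipm_smul_left, ipm_smul_right, hqq, map_inv₀, Complex.conj_ofReal,
      ← Complex.ofReal_inv, ← Complex.ofReal_mul, ← Complex.ofReal_mul, Complex.ofReal_eq_one]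
    have hcc : c * c = r := Real.mul_self_sqrt hrpos.le
    field_simp
    linarith [hcc]
  have hXn : (X ^ n : Polynomial ℂ)
      = gq σ n + ∑ k ∈ Finset.range n, ipm σ (X ^ n : Polynomial ℂ) (gs σ k) • gs σ k := by
    rw [gq]; ring
  have hipmXn : ipm σ (X ^ n : Polynomial ℂ) (gs σ n) = ((c : ℝ) : ℂ) := by
    conv_lhs => rw [hXn]
    rw [ipm_add_left hmom, ipm_sum_left hmom, hgq_eq, ipm_smul_left, hnorm, mul_one,
      Finset.sum_eq_zero, add_zero]
    intro k hk
    have hz : ipm σ (gs σ k) (gs σ n) = 0 := by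
      rw [← ipm_conj, hortho k (Finset.mem_range.mp hk), map_zero]
    rw [ipm_smul_left, hz, mul_zero]
  refine ⟨hreal, hdeg, hcoeffpos, hortho, hnorm, ?_⟩
  rw [Finset.sum_range_succ, hipmXn, ← hgq_eq]
  conv_lhs => rw [hXn]
  exact add_comm _ _

end AuxGS2

section AuxGS3

variable {σ : Measure ℝ}

variable (hmom : HasFiniteMoments σ) (hpos : PosOnPolys σ)

include hmom hpos

lemma gs_real (n : ℕ) : RP (gs σ n) := (gs_master hmom hpos n).1

lemma gs_natDegree (n : ℕ) : (gs σ n).natDegree = n := (gs_master hmom hpos n).2.1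

lemma gs_lead_pos (n : ℕ) : 0 < ((gs σ n).coeff n).re := (gs_master hmom hpos n).2.2.1.1

lemma gs_lead_real (n : ℕ) : ((gs σ n).coeff n).im = 0 := (gs_master hmom hpos n).2.2.1.2

lemma gs_orthonormal (n m : ℕ) :
    ipm σ (gs σ n) (gs σ m) = (if n = m then 1 else 0) := by
  rcases lt_trichotomy n m with h | h | h
  · rw [if_neg h.ne, ← ipm_conj, (gs_master hmom hpos m).2.2.2.1 n h, map_zero]
  · subst h; rw [if_pos rfl]; exact (gs_master hmom hpos n).2.2.2.2.1
  · rw [if_neg h.ne', (gs_master hmom hpos n).2.2.2.1 m h]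

lemma gs_ne_zero (n : ℕ) : gs σ n ≠ 0 := by
  intro h
  have := gs_lead_pos hmom hpos n
  rw [h] at this
  simp at this

/-- A monomial `X^j` is orthogonal to all `gs σ m` with `m > j`. -/
lemma ipm_Xpow_gs_eq_zero {j m : ℕ} (h : j < m) :
    ipm σ ((X : Polynomial ℂ) ^ j) (gs σ m) = 0 := by
  conv_lhs => rw [(gs_master hmom hpos j).2.2.2.2.2]
  rw [ipm_sum_left hmom]
  refine Finset.sum_eq_zero fun k hk => ?_
  rw [ipm_smul_left, gs_orthonormal hmom hpos,
    if_neg (by have := Finset.mem_range.mp hk; omega), mul_zero]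

/-- A polynomial of degree `≤ n` is orthogonal to all `gs σ m` with `m > n`. -/
lemma ipm_gs_zero_of_deg_lt {p : Polynomial ℂ} {n m : ℕ} (hd : p.natDegree ≤ n) (h : n < m) :
    ipm σ p (gs σ m) = 0 := by
  conv_lhs => rw [poly_as_sum hd]
  rw [ipm_sum_left hmom]
  refine Finset.sum_eq_zero fun j hj => ?_
  rw [ipm_smul_left, ipm_Xpow_gs_eq_zero hmom hpos
    (by have := Finset.mem_range.mp hj; omega), mul_zero]

lemma ipm_gs_zero_of_deg_lt' {p : Polynomial ℂ} {n m : ℕ} (hd : p.natDegree ≤ n) (h : n < m) :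
    ipm σ (gs σ m) p = 0 := by
  rw [← ipm_conj, ipm_gs_zero_of_deg_lt hmom hpos hd h, map_zero]

/-- Orthonormal expansion of a polynomial of degree at most `n`. -/
lemma gs_expand {p : Polynomial ℂ} {n : ℕ} (hd : p.natDegree ≤ n) :
    p = ∑ k ∈ Finset.range (n + 1), ipm σ p (gs σ k) • gs σ k := by
  set g : Polynomial ℂ := p - ∑ k ∈ Finset.range (n + 1), ipm σ p (gs σ k) • gs σ k with hg
  have hgd : g.natDegree ≤ n := by
    rw [hg]
    refine le_trans (Polynomial.natDegree_sub_le _ _) (max_le hd ?_)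
    refine Polynomial.natDegree_sum_le_of_forall_le _ _ fun k hk => ?_
    refine le_trans (Polynomial.natDegree_smul_le _ _) ?_
    rw [gs_natDegree hmom hpos]
    have := Finset.mem_range.mp hk; omega
  have hgorth : ∀ k, ipm σ g (gs σ k) = 0 := by
    intro k
    by_cases hk : k ≤ n
    · rw [hg, ipm_sub_left hmom, ipm_sum_left hmom]
      simp only [ipm_smul_left]
      rw [Finset.sum_eq_single k]
      · rw [gs_orthonormal hmom hpos, if_pos rfl, mul_one, sub_self]
      · intro j hj hjk
        rw [gs_orthonormal hmom hpos, if_neg hjk, mul_zero]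
      · intro hkk; exact absurd (Finset.mem_range.mpr (by omega)) hkk
    · exact ipm_gs_zero_of_deg_lt hmom hpos hgd (by omega)
  have key : ∀ q : Polynomial ℂ, q.natDegree ≤ n → ipm σ q g = 0 := by
    intro q hq
    conv_lhs => rw [poly_as_sum hq]
    rw [ipm_sum_left hmom]
    refine Finset.sum_eq_zero fun j hj => ?_
    rw [ipm_smul_left]
    have hXg : ipm σ ((X : Polynomial ℂ) ^ j) g = 0 := by
      conv_lhs => rw [(gs_master hmom hpos j).2.2.2.2.2]
      rw [ipm_sum_left hmom]
      refine Finset.sum_eq_zero fun k hk => ?_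
      have hkg : ipm σ (gs σ k) g = 0 := by
        rw [← ipm_conj, hgorth k, map_zero]
      rw [ipm_smul_left, hkg, mul_zero]
    rw [hXg, mul_zero]
  have hgg : ipm σ g g = 0 := key g hgd
  have hgz : g = 0 := by
    by_contra hne
    have := (ipm_self_pos hpos hne).1
    rw [hgg] at this
    simp at this
  have := sub_eq_zero.mp (hg ▸ hgz)
  linear_combination (norm := module) this

end AuxGS3

section AuxCoef

/-- The subdiagonal entries of the Jacobi matrix `J₃`. -/
def ra (σ : Measure ℝ) (n : ℕ) : ℝ := (ipm σ (X * gs σ n) (gs σ (n + 1))).re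

/-- The diagonal entries of the Jacobi matrix `J₃`. -/
def rb (σ : Measure ℝ) (n : ℕ) : ℝ := (ipm σ (X * gs σ n) (gs σ n)).re

/-- The diagonal entries of `J₅`. -/
def ral (σ : Measure ℝ) (T : Module.End ℂ (Polynomial ℂ)) (n : ℕ) : ℝ :=
  (ipm σ (T (X * gs σ n)) (gs σ n)).re

/-- The first off-diagonal entries of `J₅`. -/
def rbe (σ : Measure ℝ) (T : Module.End ℂ (Polynomial ℂ)) (n : ℕ) : ℝ :=
  (ipm σ (T (X * gs σ n)) (gs σ (n + 1))).re

/-- The second off-diagonal entries of `J₅`. -/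
def rga (σ : Measure ℝ) (T : Module.End ℂ (Polynomial ℂ)) (n : ℕ) : ℝ :=
  (ipm σ (T (X * gs σ n)) (gs σ (n + 2))).re

variable {σ : Measure ℝ} {T : Module.End ℂ (Polynomial ℂ)}
variable (hmom : HasFiniteMoments σ) (hpos : PosOnPolys σ)
  (hII : CondII T) (hIII : CondIII σ T)

include hmom hpos

lemma XP_real (n : ℕ) : RP (X * gs σ n) := RP.mul RP_X (gs_real hmom hpos n)

lemma XP_natDegree (n : ℕ) : (X * gs σ n).natDegree = n + 1 := by
  rw [Polynomial.natDegree_mul Polynomial.X_ne_zero (gs_ne_zero hmom hpos n),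
    natDegree_X, gs_natDegree hmom hpos, add_comm]

omit hmom hpos in
lemma XP_coeff_top (n : ℕ) : (X * gs σ n).coeff (n + 1) = (gs σ n).coeff n := by
  rw [Polynomial.coeff_X_mul]

lemma ra_eq (n : ℕ) : ipm σ (X * gs σ n) (gs σ (n + 1)) = ((ra σ n : ℝ) : ℂ) :=
  ipm_real_val (XP_real hmom hpos n) (gs_real hmom hpos (n + 1))

lemma rb_eq (n : ℕ) : ipm σ (X * gs σ n) (gs σ n) = ((rb σ n : ℝ) : ℂ) :=
  ipm_real_val (XP_real hmom hpos n) (gs_real hmom hpos n)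

/-- The transposed subdiagonal entry. -/
lemma ra_eq' (n : ℕ) : ipm σ (X * gs σ (n + 1)) (gs σ n) = ((ra σ n : ℝ) : ℂ) := by
  rw [ipm_X_comm, ← ipm_conj, ra_eq hmom hpos, Complex.conj_ofReal]

/-- Expansion of `X · P_n` over the orthonormal basis. -/
lemma ULX (n : ℕ) : X * gs σ n
    = ((extZ (ra σ) ((n : ℤ) - 1) : ℝ) : ℂ) • extP (gs σ) ((n : ℤ) - 1)
      + ((rb σ n : ℝ) : ℂ) • gs σ n + ((ra σ n : ℝ) : ℂ) • gs σ (n + 1) := by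
  cases n with
  | zero =>
      have hd : (X * gs σ 0).natDegree ≤ 1 := (XP_natDegree hmom hpos 0).le
      have h := gs_expand hmom hpos hd
      rw [Finset.sum_range_succ, Finset.sum_range_succ, Finset.sum_range_zero, zero_add,
        ra_eq hmom hpos, rb_eq hmom hpos] at h
      have e0 : ((extZ (ra σ) (((0 : ℕ) : ℤ) - 1) : ℝ) : ℂ) • extP (gs σ) (((0 : ℕ) : ℤ) - 1)
          = 0 := by
        simp [extZ, extP]
      rw [e0, zero_add]
      simpa using h
  | succ n =>
      have hd : (X * gs σ (n + 1)).natDegree ≤ n + 2 := (XP_natDegree hmom hpos (n + 1)).le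
      have h := gs_expand hmom hpos hd
      rw [Finset.sum_range_succ, Finset.sum_range_succ, Finset.sum_range_succ] at h
      have hz : ∀ k ∈ Finset.range n, ipm σ (X * gs σ (n + 1)) (gs σ k) • gs σ k = 0 := by
        intro k hk
        have hk' := Finset.mem_range.mp hk
        have hzz : ipm σ (X * gs σ (n + 1)) (gs σ k) = 0 := by
          rw [ipm_X_comm, ← ipm_conj,
            ipm_gs_zero_of_deg_lt hmom hpos (le_of_eq (XP_natDegree hmom hpos k)) (by omega),
            map_zero]
        rw [hzz, zero_smul]
      rw [Finset.sum_eq_zero hz, zero_add] at h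
      have hsub : ipm σ (X * gs σ (n + 1)) (gs σ n) = ((ra σ n : ℝ) : ℂ) :=
        ra_eq' hmom hpos n
      rw [hsub, ra_eq hmom hpos, rb_eq hmom hpos] at h
      have he1 : extZ (ra σ) ((n + 1 : ℕ) - 1 : ℤ) = ra σ n := by
        simp [extZ]
      have he2 : extP (gs σ) ((n + 1 : ℕ) - 1 : ℤ) = gs σ n := by
        simp [extP]
      rw [he1, he2]
      exact h

include hII

lemma WP_real (n : ℕ) : RP (T (X * gs σ n)) := T_real hII (XP_real hmom hpos n)

lemma WP_natDegree_le (n : ℕ) : (T (X * gs σ n)).natDegree ≤ n + 2 := by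
  have := T_natDegree_le hII (X * gs σ n)
  rwa [XP_natDegree hmom hpos] at this

lemma WP_coeff_top (n : ℕ) :
    (T (X * gs σ n)).coeff (n + 2) = ((xi hII (n + 1) (n + 2) : ℝ) : ℂ) * (gs σ n).coeff n := by
  rw [T_coeff_top hII (le_of_eq (XP_natDegree hmom hpos n)), XP_coeff_top]

lemma ral_eq (n : ℕ) : ipm σ (T (X * gs σ n)) (gs σ n) = ((ral σ T n : ℝ) : ℂ) :=
  ipm_real_val (WP_real hmom hpos hII n) (gs_real hmom hpos n)

lemma rbe_eq (n : ℕ) : ipm σ (T (X * gs σ n)) (gs σ (n + 1)) = ((rbe σ T n : ℝ) : ℂ) :=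
  ipm_real_val (WP_real hmom hpos hII n) (gs_real hmom hpos (n + 1))

lemma rga_eq (n : ℕ) : ipm σ (T (X * gs σ n)) (gs σ (n + 2)) = ((rga σ T n : ℝ) : ℂ) :=
  ipm_real_val (WP_real hmom hpos hII n) (gs_real hmom hpos (n + 2))

include hIII

lemma W_symm_zero {k m : ℕ} (h : k + 2 < m) : ipm σ (T (X * gs σ m)) (gs σ k) = 0 := by
  rw [hIII, ← ipm_conj,
    ipm_gs_zero_of_deg_lt hmom hpos (WP_natDegree_le hmom hpos hII k) h, map_zero]

lemma rbe_eq' (n : ℕ) : ipm σ (T (X * gs σ (n + 1))) (gs σ n) = ((rbe σ T n : ℝ) : ℂ) := by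
  rw [hIII, ← ipm_conj, rbe_eq hmom hpos hII, Complex.conj_ofReal]

lemma rga_eq' (n : ℕ) : ipm σ (T (X * gs σ (n + 2))) (gs σ n) = ((rga σ T n : ℝ) : ℂ) := by
  rw [hIII, ← ipm_conj, rga_eq hmom hpos hII, Complex.conj_ofReal]

/-- Expansion of `T(X · P_n)` over the orthonormal basis. -/
lemma ULW (n : ℕ) : T (X * gs σ n)
    = ((extZ (rga σ T) ((n : ℤ) - 2) : ℝ) : ℂ) • extP (gs σ) ((n : ℤ) - 2)
      + ((extZ (rbe σ T) ((n : ℤ) - 1) : ℝ) : ℂ) • extP (gs σ) ((n : ℤ) - 1)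
      + ((ral σ T n : ℝ) : ℂ) • gs σ n
      + ((rbe σ T n : ℝ) : ℂ) • gs σ (n + 1)
      + ((rga σ T n : ℝ) : ℂ) • gs σ (n + 2) := by
  have hd : (T (X * gs σ n)).natDegree ≤ n + 2 := WP_natDegree_le hmom hpos hII n
  have h := gs_expand hmom hpos hd
  rw [Finset.sum_range_succ, Finset.sum_range_succ, Finset.sum_range_succ] at h
  rw [ral_eq hmom hpos hII, rbe_eq hmom hpos hII, rga_eq hmom hpos hII] at h
  cases n with
  | zero =>
      rw [Finset.sum_range_zero, zero_add] at h
      have e0 : ((extZ (rga σ T) (((0 : ℕ) : ℤ) - 2) : ℝ) : ℂ) • extP (gs σ) (((0 : ℕ) : ℤ) - 2)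
          = 0 := by simp [extZ, extP]
      have e1 : ((extZ (rbe σ T) (((0 : ℕ) : ℤ) - 1) : ℝ) : ℂ) • extP (gs σ) (((0 : ℕ) : ℤ) - 1)
          = 0 := by simp [extZ, extP]
      rw [e0, e1, zero_add, zero_add]
      simpa using h
  | succ n =>
    cases n with
    | zero =>
        rw [Finset.sum_range_succ, Finset.sum_range_zero, zero_add] at h
        rw [rbe_eq' hmom hpos hII hIII] at h
        have e0 : ((extZ (rga σ T) (((1 : ℕ) : ℤ) - 2) : ℝ) : ℂ) • extP (gs σ) (((1 : ℕ) : ℤ) - 2)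
            = 0 := by simp [extZ, extP]
        have e1 : extZ (rbe σ T) (((1 : ℕ) : ℤ) - 1) = rbe σ T 0 := by simp [extZ]
        have e2 : extP (gs σ) (((1 : ℕ) : ℤ) - 1) = gs σ 0 := by simp [extP]
        rw [e0, e1, e2, zero_add]
        simpa using h
    | succ n =>
        rw [Finset.sum_range_succ, Finset.sum_range_succ] at h
        have hz : ∀ k ∈ Finset.range n,
            ipm σ (T (X * gs σ (n + 2))) (gs σ k) • gs σ k = 0 := by
          intro k hk
          have hk' := Finset.mem_range.mp hk
          rw [W_symm_zero hmom hpos hII hIII (by omega), zero_smul]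
        rw [Finset.sum_eq_zero hz, zero_add, rga_eq' hmom hpos hII hIII,
          rbe_eq' hmom hpos hII hIII] at h
        have he1 : extZ (rga σ T) ((n + 2 : ℕ) - 2 : ℤ) = rga σ T n := by simp [extZ]
        have he2 : extP (gs σ) ((n + 2 : ℕ) - 2 : ℤ) = gs σ n := by simp [extP]
        have he3 : extZ (rbe σ T) ((n + 2 : ℕ) - 1 : ℤ) = rbe σ T (n + 1) := by
          unfold extZ
          rw [if_neg (by omega)]
          congr 1
          omega
        have he4 : extP (gs σ) ((n + 2 : ℕ) - 1 : ℤ) = gs σ (n + 1) := by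
          unfold extP
          rw [if_neg (by omega)]
          congr 1
          omega
        rw [he1, he2, he3, he4]
        simpa using h

end AuxCoef

section AuxPos

variable {σ : Measure ℝ} {T : Module.End ℂ (Polynomial ℂ)}
variable (hmom : HasFiniteMoments σ) (hpos : PosOnPolys σ)
  (hII : CondII T) (hIII : CondIII σ T)

include hmom hpos

lemma extP_gs_natDegree_le (m : ℤ) : (extP (gs σ) m).natDegree ≤ m.toNat := by
  unfold extP
  split
  · simp
  · exact (gs_natDegree hmom hpos _).le

lemma gs_lead_ofReal (n : ℕ) :
    (gs σ n).coeff n = ((((gs σ n).coeff n).re : ℝ) : ℂ) := by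
  apply Complex.ext
  · simp
  · simp [gs_lead_real hmom hpos n]

lemma ra_pos (n : ℕ) : 0 < ra σ n := by
  have h := congrArg (fun p : Polynomial ℂ => p.coeff (n + 1)) (ULX hmom hpos n)
  simp only [Polynomial.coeff_add, Polynomial.coeff_smul, smul_eq_mul] at h
  have c1 : (X * gs σ n).coeff (n + 1) = (gs σ n).coeff n := XP_coeff_top n
  have c2 : (extP (gs σ) ((n : ℤ) - 1)).coeff (n + 1) = 0 :=
    Polynomial.coeff_eq_zero_of_natDegree_lt
      (by have := extP_gs_natDegree_le hmom hpos ((n : ℤ) - 1); omega)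
  have c3 : (gs σ n).coeff (n + 1) = 0 :=
    Polynomial.coeff_eq_zero_of_natDegree_lt (by rw [gs_natDegree hmom hpos]; omega)
  rw [c1, c2, c3, mul_zero, mul_zero, zero_add, zero_add] at h
  rw [gs_lead_ofReal hmom hpos n, gs_lead_ofReal hmom hpos (n + 1)] at h
  have h' : ((gs σ n).coeff n).re
      = ra σ n * (((gs σ (n + 1)).coeff (n + 1)).re) := by
    exact_mod_cast h
  have h1 := gs_lead_pos hmom hpos n
  have h2 := gs_lead_pos hmom hpos (n + 1)
  nlinarith

include hII hIII

lemma rga_pos (n : ℕ) : 0 < rga σ T n := by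
  have h := congrArg (fun p : Polynomial ℂ => p.coeff (n + 2)) (ULW hmom hpos hII hIII n)
  simp only [Polynomial.coeff_add, Polynomial.coeff_smul, smul_eq_mul] at h
  have c1 := WP_coeff_top hmom hpos hII n
  have c2 : (extP (gs σ) ((n : ℤ) - 2)).coeff (n + 2) = 0 :=
    Polynomial.coeff_eq_zero_of_natDegree_lt
      (by have := extP_gs_natDegree_le hmom hpos ((n : ℤ) - 2); omega)
  have c3 : (extP (gs σ) ((n : ℤ) - 1)).coeff (n + 2) = 0 :=
    Polynomial.coeff_eq_zero_of_natDegree_lt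
      (by have := extP_gs_natDegree_le hmom hpos ((n : ℤ) - 1); omega)
  have c4 : (gs σ n).coeff (n + 2) = 0 :=
    Polynomial.coeff_eq_zero_of_natDegree_lt (by rw [gs_natDegree hmom hpos]; omega)
  have c5 : (gs σ (n + 1)).coeff (n + 2) = 0 :=
    Polynomial.coeff_eq_zero_of_natDegree_lt (by rw [gs_natDegree hmom hpos]; omega)
  rw [c1, c2, c3, c4, c5, mul_zero, mul_zero, mul_zero, mul_zero,
    zero_add, zero_add, zero_add, zero_add] at h
  rw [gs_lead_ofReal hmom hpos n, gs_lead_ofReal hmom hpos (n + 2)] at h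
  have h' : xi hII (n + 1) (n + 2) * ((gs σ n).coeff n).re
      = rga σ T n * (((gs σ (n + 2)).coeff (n + 2)).re) := by
    exact_mod_cast h
  have h1 := gs_lead_pos hmom hpos n
  have h2 := gs_lead_pos hmom hpos (n + 2)
  have h3 := xi_pos hII (n + 1)
  nlinarith

end AuxPos

section AuxZero

variable {σ : Measure ℝ}

lemma ipm_one_one [IsProbabilityMeasure σ] : ipm σ (1 : Polynomial ℂ) 1 = 1 := by
  unfold ipm
  simp [measure_univ]

lemma gs_zero [IsProbabilityMeasure σ] : gs σ 0 = 1 := by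
  have hq : gq σ 0 = 1 := by
    rw [gq]; simp
  rw [gs_eq, hq, ipm_one_one]
  norm_num

end AuxZero

section AuxAssoc

/-- The polynomials associated to a Jacobi-type pencil, defined by the recurrence. -/
def assocP (Θ : JacobiPencil) : ℕ → Polynomial ℂ
  | 0 => 1
  | 1 => C (Θ.α : ℂ) * X + C (Θ.β : ℂ)
  | n + 2 =>
      C (((Θ.ga n : ℝ) : ℂ))⁻¹ *
        (- C ((extZ Θ.ga ((n : ℤ) - 2) : ℝ) : ℂ) * (if 2 ≤ n then assocP Θ (n - 2) else 0)
         - (C ((extZ Θ.be ((n : ℤ) - 1) : ℝ) : ℂ) - X * C ((extZ Θ.a ((n : ℤ) - 1) : ℝ) : ℂ))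
             * (if 1 ≤ n then assocP Θ (n - 1) else 0)
         - (C ((Θ.al n : ℝ) : ℂ) - X * C ((Θ.b n : ℝ) : ℂ)) * assocP Θ n
         - (C ((Θ.be n : ℝ) : ℂ) - X * C ((Θ.a n : ℝ) : ℂ)) * assocP Θ (n + 1))
  termination_by n => n
  decreasing_by all_goals omega

lemma extP_assocP_two (Θ : JacobiPencil) (n : ℕ) :
    extP (assocP Θ) ((n : ℤ) - 2) = (if 2 ≤ n then assocP Θ (n - 2) else 0) := by
  unfold extP
  split <;> split <;> first
    | rfl
    | omega
    | (congr 1; omega)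

lemma extP_assocP_one (Θ : JacobiPencil) (n : ℕ) :
    extP (assocP Θ) ((n : ℤ) - 1) = (if 1 ≤ n then assocP Θ (n - 1) else 0) := by
  unfold extP
  split <;> split <;> first
    | rfl
    | omega
    | (congr 1; omega)

lemma assocP_rec (Θ : JacobiPencil) (n : ℕ) :
    C ((Θ.ga n : ℝ) : ℂ) * assocP Θ (n + 2) =
      - C ((extZ Θ.ga ((n : ℤ) - 2) : ℝ) : ℂ) * extP (assocP Θ) ((n : ℤ) - 2)
      - (C ((extZ Θ.be ((n : ℤ) - 1) : ℝ) : ℂ) - X * C ((extZ Θ.a ((n : ℤ) - 1) : ℝ) : ℂ))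
          * extP (assocP Θ) ((n : ℤ) - 1)
      - (C ((Θ.al n : ℝ) : ℂ) - X * C ((Θ.b n : ℝ) : ℂ)) * assocP Θ n
      - (C ((Θ.be n : ℝ) : ℂ) - X * C ((Θ.a n : ℝ) : ℂ)) * assocP Θ (n + 1) := by
  conv_lhs => rw [assocP]
  rw [← mul_assoc, ← C_mul, mul_inv_cancel₀ (Complex.ofReal_ne_zero.mpr (Θ.hga n).ne'),
    map_one, one_mul, extP_assocP_two, extP_assocP_one]

lemma assocP_isAssociated (Θ : JacobiPencil) : IsAssociatedPolynomials Θ (assocP Θ) := by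
  refine ⟨by rw [assocP], by rw [assocP], fun n => assocP_rec Θ n⟩

lemma aeval_one_C_mul (T : Module.End ℂ (Polynomial ℂ)) (c : ℂ) (q : Polynomial ℂ) :
    (Polynomial.aeval T (C c * q)) 1 = c • (Polynomial.aeval T q) 1 := by
  rw [map_mul, Polynomial.aeval_C, Module.End.mul_apply, Module.algebraMap_end_apply]

lemma aeval_one_X_mul (T : Module.End ℂ (Polynomial ℂ)) (q : Polynomial ℂ) :
    (Polynomial.aeval T (X * q)) 1 = T ((Polynomial.aeval T q) 1) := by
  rw [map_mul, Polynomial.aeval_X, Module.End.mul_apply]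

lemma aeval_one_lin (T : Module.End ℂ (Polynomial ℂ)) (b a : ℂ) (q : Polynomial ℂ) :
    (Polynomial.aeval T ((C b - X * C a) * q)) 1
      = b • (Polynomial.aeval T q) 1 - a • T ((Polynomial.aeval T q) 1) := by
  have hq : (C b - X * C a) * q = C b * q - X * (C a * q) := by ring
  rw [hq, map_sub, LinearMap.sub_apply, aeval_one_C_mul, aeval_one_X_mul, aeval_one_C_mul,
    LinearMap.map_smul]

end AuxAssoc

/-- Sufficiency part of the inverse spectral theorem: given a suitable measure `σ` and an
operator `T` satisfying conditions (ii) and (iii), the functional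
`S(u,v) = ∫ u(T)(1) conj(v(T)(1)) dσ` is the spectral function of some Jacobi-type pencil. -/
theorem inverse_spectral_sufficiency (σ : Measure ℝ) [IsProbabilityMeasure σ]
    (hmom : HasFiniteMoments σ) (hpos : PosOnPolys σ)
    (T : Module.End ℂ (Polynomial ℂ)) (hII : CondII T) (hIII : CondIII σ T) :
    ∃ (Θ : JacobiPencil) (p : ℕ → Polynomial ℂ), IsAssociatedPolynomials Θ p ∧
      ∀ n m : ℕ, ipm σ ((Polynomial.aeval T (p n)) 1) ((Polynomial.aeval T (p m)) 1)
        = if n = m then 1 else 0 := by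
  classical
  set l1 : ℝ := ((gs σ 1).coeff 1).re with hl1def
  set l0 : ℝ := ((gs σ 1).coeff 0).re with hl0def
  have hl1 : 0 < l1 := gs_lead_pos hmom hpos 1
  have hξ1 : 0 < xi hII 0 1 := xi_pos hII 0
  set α : ℝ := l1 / xi hII 0 1 with hαdef
  set β : ℝ := l0 - α * xi hII 0 0 with hβdef
  have hα : 0 < α := div_pos hl1 hξ1
  set Θ : JacobiPencil :=
    { a := ra σ, b := rb σ, al := ral σ T, be := rbe σ T, ga := rga σ T, α := α, β := β,
      ha := ra_pos hmom hpos, hga := rga_pos hmom hpos hII hIII, hα := hα } with hΘ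
  refine ⟨Θ, assocP Θ, assocP_isAssociated Θ, ?_⟩
  have key : ∀ n, (Polynomial.aeval T (assocP Θ n)) 1 = gs σ n := by
    intro n
    induction n using Nat.strong_induction_on with
    | _ n IH =>
    rcases n with _ | _ | m
    · have h1 : assocP Θ 0 = 1 := by rw [assocP]
      rw [h1]
      simp [gs_zero]
    · rw [show assocP Θ 1 = C (Θ.α : ℂ) * X + C (Θ.β : ℂ) from by rw [assocP]]
      simp only [hΘ]
      rw [map_add, LinearMap.add_apply, aeval_one_C_mul, Polynomial.aeval_X,
        Polynomial.aeval_C, Module.algebraMap_end_apply]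
      have h00 := T_X_pow hII 0
      rw [Finset.sum_range_succ, Finset.sum_range_succ, Finset.sum_range_zero, zero_add,
        pow_zero, pow_one] at h00
      rw [h00]
      have hdeg : (gs σ 1).degree ≤ 1 :=
        Polynomial.natDegree_le_iff_degree_le.mp (gs_natDegree hmom hpos 1).le
      rw [show gs σ 1 = C ((gs σ 1).coeff 1) * X + C ((gs σ 1).coeff 0) from
        Polynomial.eq_X_add_C_of_degree_le_one hdeg]
      have hc1 : (gs σ 1).coeff 1 = ((l1 : ℝ) : ℂ) := gs_lead_ofReal hmom hpos 1
      have hc0 : (gs σ 1).coeff 0 = ((l0 : ℝ) : ℂ) := by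
        have h := (gs_real hmom hpos 1).coeff 0
        rw [Complex.conj_eq_iff_re] at h
        exact h.symm
      rw [hc1, hc0]
      have e1 : α * xi hII 0 1 = l1 := by
        rw [hαdef]; field_simp
      have e2 : α * xi hII 0 0 + β = l0 := by
        rw [hβdef]; ring
      have E1 : (C ((α : ℝ) : ℂ) * C ((xi hII 0 1 : ℝ) : ℂ) : Polynomial ℂ)
          = C ((l1 : ℝ) : ℂ) := by
        rw [← C_mul, ← Complex.ofReal_mul, e1]
      have E2 : (C ((α : ℝ) : ℂ) * C ((xi hII 0 0 : ℝ) : ℂ) + C ((β : ℝ) : ℂ) : Polynomial ℂ)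
          = C ((l0 : ℝ) : ℂ) := by
        rw [← C_mul, ← C_add, ← Complex.ofReal_mul, ← Complex.ofReal_add, e2]
      rw [Polynomial.smul_eq_C_mul, Polynomial.smul_eq_C_mul]
      linear_combination X * E1 + E2
    · -- inductive step
      have hIA := assocP_rec Θ m
      rw [neg_mul] at hIA
      have h0 := congrArg (fun q : Polynomial ℂ => (Polynomial.aeval T q) 1) hIA
      simp only [map_sub, map_neg, LinearMap.sub_apply, LinearMap.neg_apply,
        aeval_one_C_mul, aeval_one_lin] at h0
      have hP2 : (Polynomial.aeval T (extP (assocP Θ) ((m : ℤ) - 2))) 1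
          = extP (gs σ) ((m : ℤ) - 2) := by
        unfold extP
        split
        · simp
        · exact IH _ (by omega)
      have hP1 : (Polynomial.aeval T (extP (assocP Θ) ((m : ℤ) - 1))) 1
          = extP (gs σ) ((m : ℤ) - 1) := by
        unfold extP
        split
        · simp
        · exact IH _ (by omega)
      rw [hP2, hP1, IH m (by omega), IH (m + 1) (by omega)] at h0
      simp only [hΘ] at h0
      have hX := ULX hmom hpos m
      have hTX := congrArg T hX
      rw [map_add, map_add, LinearMap.map_smul, LinearMap.map_smul, LinearMap.map_smul] at hTX
      have hW := ULW hmom hpos hII hIII m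
      have hcomb := hTX.symm.trans hW
      have hganz : ((rga σ T m : ℝ) : ℂ) ≠ 0 :=
        Complex.ofReal_ne_zero.mpr (rga_pos hmom hpos hII hIII m).ne'
      refine smul_right_injective (Polynomial ℂ) hganz ?_
      show ((rga σ T m : ℝ) : ℂ) • (Polynomial.aeval T (assocP Θ (m + 2))) 1
        = ((rga σ T m : ℝ) : ℂ) • gs σ (m + 2)
      rw [← hΘ] at h0
      rw [h0]
      linear_combination (norm := module) hcomb
  intro n m
  rw [key n, key m, gs_orthonormal hmom hpos]

end
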